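/- Let L ⊆ X⁺ be a rational language recognized by a deterministic finite automaton with m states, and let φ : X⁺ → S be a homomorphism to a finite semigroup S. Then every element of φ(L) can be represented by a word in L of length at most m(|S|+1) − 1; that is, for each s ∈ φ(L) there exists w ∈ L with φ(w) = s and |w| ≤ m(|S|+1) − 1. -/

import Mathlib

lemma short_rep_aux {X : Type*} {σ : Type*} [Fintype σ]
    (M : DFA X σ) (L : Language X) (hL : M.accepts = L)
    {S : Type*} [Semigroup S] [Fintype S] (φ : List X → S)
    (hφ : ∀ u v : List X, u ≠ [] → v ≠ [] → φ (u ++ v) = φ u * φ v) :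
    ∀ n (w : List X), w.length = n → w ∈ L → w ≠ [] →
      ∃ w' ∈ L, φ w' = φ w ∧ w'.length ≤ Fintype.card σ * (Fintype.card S + 1) - 1 := by
  intro n
  induction n using Nat.strong_induction_on with
  | _ n ih =>
  intro w hn hw hwne
  by_cases hb : w.length ≤ Fintype.card σ * (Fintype.card S + 1) - 1
  · exact ⟨w, hw, rfl, hb⟩
  · push_neg at hb
    have hcard : Fintype.card (σ × Option S) < Fintype.card (Fin (w.length + 1)) := by
      simp only [Fintype.card_prod, Fintype.card_option, Fintype.card_fin]
      omega
    set f : Fin (w.length + 1) → σ × Option S :=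
      fun k => (M.eval (w.take k), if (k : ℕ) = 0 then none else some (φ (w.take k))) with hf
    obtain ⟨a, b, hab, hfab⟩ := Fintype.exists_ne_map_eq_of_card_lt f hcard
    wlog hlt : (a : ℕ) < (b : ℕ) generalizing a b
    · exact this b a hab.symm hfab.symm
        (lt_of_le_of_ne (Nat.le_of_not_lt hlt) (fun h => hab (Fin.ext h.symm)))
    have heval : M.eval (w.take a) = M.eval (w.take b) := congrArg Prod.fst hfab
    have hopt : (if (a : ℕ) = 0 then (none : Option S) else some (φ (w.take a)))
        = if (b : ℕ) = 0 then none else some (φ (w.take b)) := congrArg Prod.snd hfab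
    have hb0 : (b : ℕ) ≠ 0 := by omega
    have ha0 : (a : ℕ) ≠ 0 := by
      intro h
      rw [if_pos h, if_neg hb0] at hopt
      exact nomatch hopt
    rw [if_neg ha0, if_neg hb0] at hopt
    have hφab : φ (w.take a) = φ (w.take b) := Option.some.injEq _ _ ▸ Option.some_injective S hopt
    -- new word
    set w' : List X := w.take a ++ w.drop b with hw'
    have hble : (b : ℕ) ≤ w.length := by omega
    have htakene : w.take (a : ℕ) ≠ [] := by
      simp [List.take_eq_nil_iff]
      exact ⟨fun h => ha0 (by simp [h]), hwne⟩
    have hw'ne : w' ≠ [] := by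
      simp [hw', htakene]
    have hw'len : w'.length < w.length := by
      simp [hw', List.length_take, List.length_drop]
      omega
    have hw'mem : w' ∈ L := by
      rw [← hL] at hw ⊢
      rw [DFA.mem_accepts] at hw ⊢
      have : M.eval w' = M.eval w := by
        conv_rhs => rw [← List.take_append_drop (b : ℕ) w]
        simp only [hw', DFA.eval, DFA.evalFrom_of_append]
        exact congrFun (congrArg M.evalFrom heval) _
      rwa [this]
    have hw'φ : φ w' = φ w := by
      by_cases hdrop : w.drop (b : ℕ) = []
      · have hbl : (b : ℕ) = w.length := by
          have := List.drop_eq_nil_iff.mp hdrop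
          omega
        have : w' = w.take a := by simp [hw', hdrop]
        rw [this, hφab, hbl, List.take_length]
      · rw [hw', hφ _ _ htakene hdrop, hφab, ← hφ _ _ (by
          simp [List.take_eq_nil_iff]; exact ⟨fun h => hb0 (by simp [h]), hwne⟩) hdrop,
          List.take_append_drop]
    obtain ⟨w'', h1, h2, h3⟩ := ih w'.length (by omega) w' rfl hw'mem hw'ne
    exact ⟨w'', h1, h2.trans hw'φ, h3⟩

/-- If `L ⊆ X⁺` is recognized by a DFA with `m` states and `φ : X⁺ → S` is a
homomorphism to a finite semigroup, then every element of `φ(L)` is represented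
by a word in `L` of length at most `m(|S|+1) - 1`. -/
theorem short_representative_of_rational {X : Type*} {σ : Type*} [Fintype σ]
    (M : DFA X σ) (L : Language X) (hL : M.accepts = L) (hne : ∀ w ∈ L, w ≠ [])
    {S : Type*} [Semigroup S] [Fintype S] (φ : List X → S)
    (hφ : ∀ u v : List X, u ≠ [] → v ≠ [] → φ (u ++ v) = φ u * φ v)
    (s : S) (hs : ∃ w ∈ L, φ w = s) :
    ∃ w ∈ L, φ w = s ∧ w.length ≤ Fintype.card σ * (Fintype.card S + 1) - 1 := by
  obtain ⟨w, hw, hws⟩ := hs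
  obtain ⟨w', h1, h2, h3⟩ := short_rep_aux M L hL φ hφ w.length w rfl hw (hne w hw)
  exact ⟨w', h1, h2.trans hws, h3⟩
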